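/- Let $a$ and $b$ be positive integers with $\gcd(a,b)=1$. Then the sum of reciprocals of the primes congruent to $b$ modulo $a$ diverges: $\sum_{p \text{ prime},\ p \equiv b \pmod a} \dfrac{1}{p} = \infty$. -/

import Mathlib

set_option maxHeartbeats 1000000

open ArithmeticFunction vonMangoldt Filter Topology LSeries

lemma key_not_summable (q : ℕ) [NeZero q] (a : ZMod q) (ha : IsUnit a) :
    ¬ Summable ({n : ℕ | n.Prime ∧ (n : ZMod q) = a}.indicator fun n ↦ (1 : ℝ) / n) := by
  intro hsum
  set S := {n : ℕ | n.Prime ∧ (n : ZMod q) = a} with hS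
  set g := S.indicator (fun n ↦ (1 : ℝ) / n) with hgdef
  have hg0 : ∀ n, 0 ≤ g n := fun n ↦ Set.indicator_apply_nonneg (fun _ ↦ by positivity)
  obtain ⟨C, hC⟩ := LSeries_residueClass_lower_bound ha
  set φinv := ((q.totient : ℝ))⁻¹ with hφ
  have hφ0 : 0 < φinv := inv_pos.mpr (mod_cast q.totient.pos_of_neZero)
  -- choose a tail cutoff
  obtain ⟨N, hN⟩ := ((tendsto_sum_nat_add g).eventually_lt_const
    (show (0:ℝ) < φinv / 4 by positivity)).exists
  set B := ∑ n ∈ Finset.range N, (if n.Prime then residueClass a n else 0) / (n : ℝ) with hB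
  have hD := summable_residueClass_non_primes_div a
  set D := ∑' n : ℕ, (if n.Prime then 0 else residueClass a n) / (n : ℝ) with hDdef
  have key : ∀ {x : ℝ}, x ∈ Set.Ioc 1 2 →
      φinv / (x - 1) - C ≤ B + D + (2 / (x - 1)) * (φinv / 4) := by
    intro x hx
    have hx1 : (0:ℝ) < x - 1 := sub_pos.mpr hx.1
    have hc0 : (0:ℝ) ≤ 2 / (x - 1) := by positivity
    have hsx : Summable fun n : ℕ ↦ residueClass a n / (n : ℝ) ^ x :=
      summable_real_of_abscissaOfAbsConv_lt <|
        (abscissaOfAbsConv_residueClass_le_one a).trans_lt <| mod_cast hx.1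
    set Gp := fun n : ℕ ↦ (if n.Prime then residueClass a n else 0) / (n : ℝ) ^ x with hGp
    set Gnp := fun n : ℕ ↦ (if n.Prime then 0 else residueClass a n) / (n : ℝ) ^ x with hGnp
    have hGp0 : ∀ n, 0 ≤ Gp n := fun n ↦ by
      have := residueClass_nonneg a n
      simp only [hGp]
      split_ifs <;> positivity
    have hGnp0 : ∀ n, 0 ≤ Gnp n := fun n ↦ by
      have := residueClass_nonneg a n
      simp only [hGnp]
      split_ifs <;> positivity
    have hGple : ∀ n, Gp n ≤ residueClass a n / (n : ℝ) ^ x := fun n ↦ by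
      have := residueClass_nonneg a n
      simp only [hGp]
      split_ifs with h
      · exact le_rfl
      · simp only [zero_div]; positivity
    have hGnple : ∀ n, Gnp n ≤ residueClass a n / (n : ℝ) ^ x := fun n ↦ by
      have := residueClass_nonneg a n
      simp only [hGnp]
      split_ifs with h
      · simp only [zero_div]; positivity
      · exact le_rfl
    have hsGp : Summable Gp := hsx.of_nonneg_of_le hGp0 hGple
    have hsGnp : Summable Gnp := hsx.of_nonneg_of_le hGnp0 hGnple
    have hsplit : (∑' n : ℕ, residueClass a n / (n : ℝ) ^ x) = ∑' n, Gp n + ∑' n, Gnp n := by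
      rw [← Summable.tsum_add hsGp hsGnp]
      refine tsum_congr fun n ↦ ?_
      simp only [hGp, hGnp, ← add_div]
      split_ifs <;> simp
    -- bound the non-prime part
    have hGnpD : ∑' n, Gnp n ≤ D := by
      refine Summable.tsum_le_tsum (fun n ↦ ?_) hsGnp hD
      rcases Nat.eq_zero_or_pos n with rfl | hn
      · simp [hGnp]
      · have hrc : (0:ℝ) ≤ if n.Prime then 0 else residueClass a n := by
          have := residueClass_nonneg a n; split_ifs <;> simp [this]
        refine div_le_div_of_nonneg_left hrc (mod_cast hn) ?_
        conv_lhs => rw [← Real.rpow_one (n : ℝ)]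
        exact Real.rpow_le_rpow_of_exponent_le (by exact_mod_cast hn) hx.1.le
    -- bound the prime part
    set RHS := fun n : ℕ ↦ if n < N then (if n.Prime then residueClass a n else 0) / (n : ℝ)
      else (2 / (x - 1)) * g n with hRHS
    have hRHSshift : ∀ k : ℕ, RHS (k + N) = (2 / (x - 1)) * g (k + N) := fun k ↦ by
      simp [hRHS, Nat.not_lt.mpr (Nat.le_add_left N k)]
    have hsRHS : Summable RHS :=
      (summable_nat_add_iff N).mp <|
        (((summable_nat_add_iff N).mpr hsum).mul_left (2 / (x - 1))).congr
          fun k ↦ (hRHSshift k).symm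
    have hptwise : ∀ n, Gp n ≤ RHS n := by
      intro n
      by_cases hlt : n < N
      · -- small n: compare n^x with n
        simp only [hRHS, if_pos hlt]
        rcases Nat.eq_zero_or_pos n with rfl | hn
        · simp [hGp, Nat.not_prime_zero]
        · have hrc : (0:ℝ) ≤ if n.Prime then residueClass a n else 0 := by
            have := residueClass_nonneg a n; split_ifs <;> simp [this]
          have hn0 : (0:ℝ) < (n : ℝ) := by exact_mod_cast hn
          refine div_le_div_of_nonneg_left hrc hn0 ?_
          conv_lhs => rw [← Real.rpow_one (n : ℝ)]
          exact Real.rpow_le_rpow_of_exponent_le (by exact_mod_cast hn) hx.1.le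
      · -- large n: use log p ≤ (2/(x-1)) p^((x-1)/2)
        simp only [hRHS, if_neg hlt]
        by_cases hp : n ∈ S
        · have hp' : n.Prime := hp.1
          have hgn : g n = 1 / (n : ℝ) := Set.indicator_of_mem hp _
          have hrn : residueClass a n = Real.log n := by
            have h' : residueClass a n = ArithmeticFunction.vonMangoldt n :=
              Set.indicator_of_mem (s := {n : ℕ | (n : ZMod q) = a})
                (f := fun n ↦ ArithmeticFunction.vonMangoldt n) hp.2
            rw [h', vonMangoldt_apply_prime hp']
          have h1 : (1:ℝ) ≤ (n : ℝ) := by exact_mod_cast hp'.one_lt.le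
          have h0 : (0:ℝ) < (n : ℝ) := by linarith
          have hlog : Real.log n ≤ 2 / (x - 1) * (n : ℝ) ^ ((x - 1) / 2) := by
            have h := Real.log_le_rpow_div h0.le (half_pos hx1)
            rw [div_div_eq_mul_div] at h
            exact h.trans_eq (by ring)
          have hpow : (n : ℝ) ^ ((x - 1) / 2) / (n : ℝ) ^ x ≤ 1 / (n : ℝ) := by
            rw [← Real.rpow_sub h0]
            calc (n : ℝ) ^ ((x - 1) / 2 - x) ≤ (n : ℝ) ^ (-1 : ℝ) :=
                  Real.rpow_le_rpow_of_exponent_le h1 (by linarith)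
              _ = 1 / (n : ℝ) := by rw [Real.rpow_neg_one, one_div]
          have hlogpos : (0:ℝ) ≤ Real.log n := Real.log_nonneg h1
          calc Gp n = Real.log n / (n : ℝ) ^ x := by simp [hGp, hp', hrn]
            _ ≤ (2 / (x - 1) * (n : ℝ) ^ ((x - 1) / 2)) / (n : ℝ) ^ x := by
                gcongr
            _ = (2 / (x - 1)) * ((n : ℝ) ^ ((x - 1) / 2) / (n : ℝ) ^ x) := by ring
            _ ≤ (2 / (x - 1)) * (1 / (n : ℝ)) := mul_le_mul_of_nonneg_left hpow hc0
            _ = (2 / (x - 1)) * g n := by rw [hgn]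
        · have hGpz : Gp n = 0 := by
            simp only [hGp]
            by_cases hpr : n.Prime
            · have hrz : residueClass a n = 0 := by
                have hnm : n ∉ {n : ℕ | (n : ZMod q) = a} := fun hmem ↦ hp ⟨hpr, hmem⟩
                exact Set.indicator_of_notMem (s := {n : ℕ | (n : ZMod q) = a})
                  (f := fun n ↦ ArithmeticFunction.vonMangoldt n) hnm
              simp [hpr, hrz]
            · simp [hpr]
          rw [hGpz]
          exact mul_nonneg hc0 (hg0 n)
    have hGpB : ∑' n, Gp n ≤ B + (2 / (x - 1)) * (φinv / 4) := by
      have h1 : ∑' n, Gp n ≤ ∑' n, RHS n := Summable.tsum_le_tsum hptwise hsGp hsRHS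
      have h2 : ∑ i ∈ Finset.range N, RHS i + ∑' i : ℕ, RHS (i + N) = ∑' n, RHS n :=
        Summable.sum_add_tsum_nat_add N hsRHS
      have h3 : ∑ i ∈ Finset.range N, RHS i = B := by
        refine Finset.sum_congr rfl fun i hi ↦ ?_
        simp [hRHS, Finset.mem_range.mp hi]
      have h4 : ∑' i : ℕ, RHS (i + N) = (2 / (x - 1)) * ∑' i : ℕ, g (i + N) := by
        rw [← tsum_mul_left]
        exact tsum_congr hRHSshift
      have h5 : (2 / (x - 1)) * ∑' i : ℕ, g (i + N) ≤ (2 / (x - 1)) * (φinv / 4) :=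
        mul_le_mul_of_nonneg_left hN.le hc0
      calc ∑' n, Gp n ≤ ∑' n, RHS n := h1
        _ = B + (2 / (x - 1)) * ∑' i : ℕ, g (i + N) := by rw [← h2, h3, h4]
        _ ≤ B + (2 / (x - 1)) * (φinv / 4) := by linarith
    calc φinv / (x - 1) - C ≤ ∑' n : ℕ, residueClass a n / (n : ℝ) ^ x := hC hx
      _ = ∑' n, Gp n + ∑' n, Gnp n := hsplit
      _ ≤ (B + (2 / (x - 1)) * (φinv / 4)) + D := add_le_add hGpB hGnpD
      _ = B + D + (2 / (x - 1)) * (φinv / 4) := by ring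
  -- derive a contradiction
  set K := C + B + D with hK
  have hKt : ∀ t : ℝ, 0 < t → t ≤ 1 → φinv / 2 ≤ K * t := by
    intro t ht0 ht1
    have h := key (x := 1 + t) ⟨by linarith, by linarith⟩
    simp only [add_sub_cancel_left] at h
    have h2 : φinv / t - (2 / t) * (φinv / 4) = (φinv / 2) / t := by
      field_simp
      ring
    have h3 : (φinv / 2) / t ≤ K := by rw [← h2]; linarith
    calc φinv / 2 = (φinv / 2) / t * t := by rw [div_mul_cancel₀ _ ht0.ne']
      _ ≤ K * t := mul_le_mul_of_nonneg_right h3 ht0.le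
  rcases le_or_gt K 0 with h0 | h0
  · have := hKt 1 one_pos le_rfl
    nlinarith
  · have ht0 : 0 < min 1 (φinv / (4 * K)) := lt_min one_pos (by positivity)
    have := hKt _ ht0 (min_le_left _ _)
    have h2 : K * min 1 (φinv / (4 * K)) ≤ K * (φinv / (4 * K)) :=
      mul_le_mul_of_nonneg_left (min_le_right _ _) h0.le
    have h3 : K * (φinv / (4 * K)) = φinv / 4 := by field_simp
    nlinarith
/-- The sum of reciprocals of the primes congruent to `b` modulo `a` diverges
(for `a`, `b` coprime positive integers). -/
theorem stmt9 (a b : ℕ) (ha : 0 < a) (hb : 0 < b) (hab : Nat.gcd a b = 1) :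
    ∑' p : {p : ℕ // p.Prime ∧ p % a = b % a}, (1 : ENNReal) / ((p : ℕ) : ENNReal) = ⊤ := by
  haveI : NeZero a := ⟨ha.ne'⟩
  by_contra h
  -- pass from `ENNReal` to `ℝ≥0` summability
  have h0 : ∀ p : {p : ℕ // p.Prime ∧ p % a = b % a},
      (1 : ENNReal) / ((p : ℕ) : ENNReal) =
        ENNReal.ofNNReal ((1 : NNReal) / ((p : ℕ) : NNReal)) := by
    intro p
    have hne : ((p : ℕ) : NNReal) ≠ 0 := by exact_mod_cast p.2.1.pos.ne'
    rw [ENNReal.coe_div hne, ENNReal.coe_one, ENNReal.coe_natCast]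
  rw [tsum_congr h0] at h
  have h1 : Summable fun p : {p : ℕ // p.Prime ∧ p % a = b % a} ↦
      (1 : NNReal) / ((p : ℕ) : NNReal) := ENNReal.tsum_coe_ne_top_iff_summable.mp h
  have h2 : Summable fun p : {p : ℕ // p.Prime ∧ p % a = b % a} ↦ (1 : ℝ) / ((p : ℕ) : ℝ) := by
    have := NNReal.summable_coe.mpr h1
    refine this.congr fun p ↦ ?_
    push_cast
    rfl
  -- reformulate via an indicator function
  have h3 : Summable ({p : ℕ | p.Prime ∧ p % a = b % a}.indicator fun n ↦ (1 : ℝ) / n) := by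
    rw [← summable_subtype_iff_indicator]
    exact h2
  have hSeq : {p : ℕ | p.Prime ∧ p % a = b % a} =
      {p : ℕ | p.Prime ∧ (p : ZMod a) = (b : ZMod a)} := by
    ext p
    simp only [Set.mem_setOf_eq, ZMod.natCast_eq_natCast_iff']
  rw [hSeq] at h3
  exact key_not_summable a (b : ZMod a)
    ((ZMod.isUnit_iff_coprime b a).mpr (Nat.coprime_comm.mp hab)) h3
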